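/- Let f : ℝ → ℝ be a convex function and let A, B be n×n Hermitian complex matrices. Set X = f((A+B)/2) and Y = (f(A)+f(B))/2. Then there exist n×n unitary matrices U and V such that X ≤ (U Y Uᴴ + V Y Vᴴ)/2 in the Loewner order. -/

import Mathlib

set_option linter.unusedSectionVars false
set_option maxHeartbeats 1600000

open Matrix
open scoped ComplexOrder

/-- The `j`-th largest eigenvalue of a Hermitian matrix (`0`-indexed, so `eigDesc hA ⟨0, _⟩`
is the largest), counted with multiplicity. -/
noncomputable def eigDesc {n : ℕ} {A : Matrix (Fin n) (Fin n) ℂ} (hA : A.IsHermitian)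
    (j : Fin n) : ℝ :=
  hA.eigenvalues (Tuple.sort hA.eigenvalues j.rev)

/-- Applying a real function to a Hermitian matrix via the functional calculus yields a
Hermitian matrix. -/
lemma isHermitian_cfc {n : ℕ} {A : Matrix (Fin n) (Fin n) ℂ} (hA : A.IsHermitian)
    (f : ℝ → ℝ) : (hA.cfc f).IsHermitian := by
  rw [← hA.cfc_eq]
  exact cfc_predicate f A

lemma isHermitian_half_smul {n : ℕ} {X : Matrix (Fin n) (Fin n) ℂ} (hX : X.IsHermitian) :
    ((2 : ℝ)⁻¹ • X).IsHermitian := by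
  show _ = _
  rw [Matrix.conjTranspose_smul, star_trivial, hX.eq]

lemma isHermitian_sum_conj {m n : ℕ} {A : Fin m → Matrix (Fin n) (Fin n) ℂ}
    (Z : Fin m → Matrix (Fin n) (Fin n) ℂ) (hA : ∀ i, (A i).IsHermitian) :
    (∑ i, (Z i)ᴴ * A i * Z i).IsHermitian := by
  show _ = _
  rw [Matrix.conjTranspose_sum]
  exact Finset.sum_congr rfl fun i _ => (isHermitian_conjTranspose_mul_mul (Z i) (hA i)).eq

namespace BourinAux


variable {ι κ μ : Type*} [Fintype ι] [Fintype κ] [Fintype μ] [DecidableEq ι] [DecidableEq κ]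

/-- The `n × q` "isometry" matrix whose `k`-th column is the `g k`-th standard basis vector. -/
noncomputable def emb (g : κ → ι) : Matrix ι κ ℂ :=
  Matrix.of fun i k => if g k = i then 1 else 0

lemma conjTranspose_emb_mul (g : κ → ι) (M : Matrix ι μ ℂ) :
    (emb g)ᴴ * M = M.submatrix g id := by
  ext k j
  simp only [Matrix.mul_apply, Matrix.conjTranspose_apply, emb, Matrix.of_apply,
    Matrix.submatrix_apply, id]
  rw [Finset.sum_congr rfl (fun i _ => by rw [apply_ite star, star_one, star_zero])]
  simp [Finset.sum_ite_eq]

lemma mul_emb (M : Matrix μ ι ℂ) (g : κ → ι) :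
    M * emb g = M.submatrix id g := by
  ext j k
  simp only [Matrix.mul_apply, emb, Matrix.of_apply, Matrix.submatrix_apply, id,
    mul_ite, mul_one, mul_zero]
  simp [Finset.sum_ite_eq']

lemma conjTranspose_emb_mul_emb_self (g : κ → ι) (hg : Function.Injective g) :
    (emb g)ᴴ * emb g = 1 := by
  rw [conjTranspose_emb_mul]
  ext k l
  simp only [Matrix.submatrix_apply, emb, Matrix.of_apply, Matrix.one_apply, id, hg.eq_iff]
  exact if_congr eq_comm rfl rfl

lemma conjTranspose_emb_mul_emb_disjoint {κ' : Type*} [Fintype κ'] (g : κ → ι) (g' : κ' → ι)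
    (h : ∀ k l, g k ≠ g' l) : (emb g)ᴴ * emb g' = 0 := by
  rw [conjTranspose_emb_mul]
  ext k l
  simp only [Matrix.submatrix_apply, emb, Matrix.of_apply, Matrix.zero_apply, id]
  exact if_neg (fun hh => h k l hh.symm)

lemma emb_mul_diag_mul (g : κ → ι) (c : κ → ℂ) :
    emb g * Matrix.diagonal c * (emb g)ᴴ
      = Matrix.diagonal (fun i => ∑ k, if g k = i then c k else 0) := by
  have h1 : emb g * Matrix.diagonal c = Matrix.of fun i l => if g l = i then c l else 0 := by
    ext i l
    simp only [Matrix.mul_apply, emb, Matrix.of_apply, Matrix.diagonal_apply, mul_ite, mul_zero,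
      ite_mul, one_mul, zero_mul]
    rw [Finset.sum_congr rfl (fun k _ => ?_), Finset.sum_ite_eq' Finset.univ l
      (fun k => if g k = i then c k else 0)]
    · simp
    · by_cases h : k = l <;> by_cases h' : g k = i <;> simp [h, h']
  rw [h1]
  ext i j
  simp only [Matrix.mul_apply, Matrix.conjTranspose_apply, emb, Matrix.of_apply,
    Matrix.diagonal_apply]
  by_cases hij : i = j
  · subst hij
    simp only [if_pos rfl]
    refine Finset.sum_congr rfl fun l _ => ?_
    by_cases h : g l = i <;> simp [h]
  · rw [if_neg hij]
    refine Finset.sum_eq_zero fun l _ => ?_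
    by_cases h : g l = i
    · have : g l ≠ j := fun hh => hij (h ▸ hh ▸ rfl)
      simp [h, this, hij]
    · simp [h]

lemma dot_conj (W : Matrix ι κ ℂ) (N : Matrix ι ι ℂ) (h : κ → ℂ) :
    star h ⬝ᵥ (Wᴴ * N * W) *ᵥ h = star (W *ᵥ h) ⬝ᵥ N *ᵥ (W *ᵥ h) := by
  rw [star_mulVec, ← Matrix.mulVec_mulVec, ← Matrix.mulVec_mulVec,
    Matrix.dotProduct_mulVec (star h) Wᴴ]

lemma dot_diag (r : ι → ℝ) (x : ι → ℂ) :
    star x ⬝ᵥ (Matrix.diagonal (fun i => (r i : ℂ))) *ᵥ x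
      = ((∑ i, r i * Complex.normSq (x i) : ℝ) : ℂ) := by
  push_cast
  rw [dotProduct]
  refine Finset.sum_congr rfl fun i _ => ?_
  rw [Matrix.mulVec_diagonal]
  have : (starRingEnd ℂ) (x i) * x i = (Complex.normSq (x i) : ℂ) := by
    rw [mul_comm, Complex.mul_conj]
  calc star x i * ((r i : ℂ) * x i) = (r i : ℂ) * ((starRingEnd ℂ) (x i) * x i) := by
        simp [Pi.star_apply]; ring
    _ = (r i : ℂ) * (Complex.normSq (x i) : ℂ) := by rw [this]

lemma dot_star_self (x : ι → ℂ) :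
    star x ⬝ᵥ x = ((∑ i, Complex.normSq (x i) : ℝ) : ℂ) := by
  push_cast
  rw [dotProduct]
  refine Finset.sum_congr rfl fun i _ => ?_
  rw [Pi.star_apply]
  rw [show star (x i) = (starRingEnd ℂ) (x i) from rfl, mul_comm, Complex.mul_conj]


lemma ofReal_comp_eq (r : ι → ℝ) :
    (RCLike.ofReal ∘ r : ι → ℂ) = fun i => (r i : ℂ) := rfl

/-- Jensen's inequality for quadratic forms and the functional calculus. -/
lemma jensen_qf {f : ℝ → ℝ} (hf : ConvexOn ℝ Set.univ f) {P : Matrix ι ι ℂ}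
    (hP : P.IsHermitian) (φ : ι → ℂ) (hφ : star φ ⬝ᵥ φ = 1) :
    f ((star φ ⬝ᵥ P *ᵥ φ).re) ≤ (star φ ⬝ᵥ hP.cfc f *ᵥ φ).re := by
  set W : Matrix ι ι ℂ := (hP.eigenvectorUnitary : Matrix ι ι ℂ) with hWdef
  have hWmem : W ∈ Matrix.unitaryGroup ι ℂ := (hP.eigenvectorUnitary).2
  have hW1 : W * Wᴴ = 1 := by
    rw [← Matrix.star_eq_conjTranspose]; exact mem_unitaryGroup_iff.mp hWmem
  set ψ : ι → ℂ := Wᴴ *ᵥ φ with hψdef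
  have hspec : P = (Wᴴ)ᴴ * Matrix.diagonal (fun i => (hP.eigenvalues i : ℂ)) * Wᴴ := by
    rw [conjTranspose_conjTranspose, ← ofReal_comp_eq, ← Matrix.star_eq_conjTranspose]
    exact hP.spectral_theorem
  have hcfc : hP.cfc f
      = (Wᴴ)ᴴ * Matrix.diagonal (fun i => ((f (hP.eigenvalues i) : ℝ) : ℂ)) * Wᴴ := by
    rw [conjTranspose_conjTranspose, ← Matrix.star_eq_conjTranspose]
    rfl
  have hnorm : star ψ ⬝ᵥ ψ = 1 := by
    have h1 : star φ ⬝ᵥ ((Wᴴ)ᴴ * 1 * Wᴴ) *ᵥ φ = star ψ ⬝ᵥ 1 *ᵥ ψ := dot_conj Wᴴ 1 φ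
    rw [conjTranspose_conjTranspose, mul_one, hW1] at h1
    simp only [Matrix.one_mulVec] at h1
    rw [← h1]; exact hφ
  have hsum1 : ∑ i, Complex.normSq (ψ i) = 1 := by
    have := (dot_star_self ψ).symm.trans hnorm
    exact_mod_cast this
  have hqP : (star φ ⬝ᵥ P *ᵥ φ).re = ∑ i, hP.eigenvalues i * Complex.normSq (ψ i) := by
    conv_lhs => rw [hspec]
    rw [dot_conj, ← hψdef, dot_diag, Complex.ofReal_re]
  have hqC : (star φ ⬝ᵥ hP.cfc f *ᵥ φ).re
      = ∑ i, f (hP.eigenvalues i) * Complex.normSq (ψ i) := by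
    conv_lhs => rw [hcfc]
    rw [dot_conj, ← hψdef, dot_diag, Complex.ofReal_re]
  rw [hqP, hqC]
  have := hf.map_sum_le (t := Finset.univ) (w := fun i => Complex.normSq (ψ i))
    (p := fun i => hP.eigenvalues i) (fun i _ => Complex.normSq_nonneg _) hsum1
    (fun i _ => Set.mem_univ _)
  simp only [smul_eq_mul] at this
  calc f (∑ i, hP.eigenvalues i * Complex.normSq (ψ i))
      = f (∑ i, Complex.normSq (ψ i) * hP.eigenvalues i) := by
        congr 1; exact Finset.sum_congr rfl fun i _ => mul_comm _ _
    _ ≤ ∑ i, Complex.normSq (ψ i) * f (hP.eigenvalues i) := this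
    _ = ∑ i, f (hP.eigenvalues i) * Complex.normSq (ψ i) :=
        Finset.sum_congr rfl fun i _ => mul_comm _ _

/-- The one-block lemma: if `d` is antitone and every unit vector supported on the first
`j+1` coordinates has Rayleigh quotient at least `d j`, then `diag d ≤ u M uᴴ` for some
unitary `u`. -/
lemma key {q : ℕ} {M : Matrix (Fin q) (Fin q) ℂ} (hM : M.IsHermitian) (d : Fin q → ℝ)
    (hd : Antitone d)
    (H : ∀ (j : Fin q) (h : Fin q → ℂ), (∀ i, j < i → h i = 0) → star h ⬝ᵥ h = 1 →
      d j ≤ (star h ⬝ᵥ M *ᵥ h).re) :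
    ∃ u ∈ Matrix.unitaryGroup (Fin q) ℂ,
      (u * M * uᴴ - Matrix.diagonal (fun i => (d i : ℂ))).PosSemidef := by
  classical
  set W : Matrix (Fin q) (Fin q) ℂ := (hM.eigenvectorUnitary : Matrix (Fin q) (Fin q) ℂ) with hWdef
  set ρ := hM.eigenvalues with hρdef
  have hWmem : W ∈ Matrix.unitaryGroup (Fin q) ℂ := (hM.eigenvectorUnitary).2
  have hW1 : W * Wᴴ = 1 := by
    rw [← Matrix.star_eq_conjTranspose]; exact mem_unitaryGroup_iff.mp hWmem
  have hW2 : Wᴴ * W = 1 := by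
    rw [← Matrix.star_eq_conjTranspose]; exact mem_unitaryGroup_iff'.mp hWmem
  set τ : Equiv.Perm (Fin q) := Fin.revPerm.trans (Tuple.sort ρ) with hτdef
  have hτ : ∀ j : Fin q, τ j = Tuple.sort ρ j.rev := fun j => rfl
  have hanti : ∀ a b : Fin q, a ≤ b → ρ (τ b) ≤ ρ (τ a) := by
    intro a b hab
    have := Tuple.monotone_sort ρ (Fin.rev_le_rev.mpr hab)
    simpa [hτ] using this
  have hspec : M = (Wᴴ)ᴴ * Matrix.diagonal (fun i => (ρ i : ℂ)) * Wᴴ := by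
    rw [conjTranspose_conjTranspose, ← ofReal_comp_eq, ← Matrix.star_eq_conjTranspose]
    exact hM.spectral_theorem
  -- Claim 1 : d j ≤ ρ (τ j) for all j
  have claim1 : ∀ j, d j ≤ ρ (τ j) := by
    intro j
    set cast : Fin (j.1 + 1) → Fin q := fun l => ⟨l.1, by omega⟩ with hcastdef
    have hcast_inj : Function.Injective cast := by
      intro a b hab
      have := congrArg Fin.val hab
      exact Fin.ext this
    set T : Matrix (Fin j.1) (Fin (j.1 + 1)) ℂ :=
      Matrix.of fun k l => Wᴴ (τ ⟨k.1, lt_trans k.2 j.2⟩) (cast l) with hTdef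
    have hnotinj : ¬ Function.Injective T.mulVecLin := by
      intro hinj
      have := LinearMap.finrank_le_finrank_of_injective hinj
      simp only [Module.finrank_pi, Fintype.card_fin] at this
      omega
    obtain ⟨x₁, x₂, hTx, hne⟩ := Function.not_injective_iff.mp hnotinj
    set x := x₁ - x₂ with hxdef
    have hx0 : x ≠ 0 := sub_ne_zero.mpr hne
    have hTx0 : T *ᵥ x = 0 := by
      have : T.mulVecLin x = 0 := by rw [hxdef, map_sub, hTx, sub_self]
      simpa [Matrix.mulVecLin_apply] using this
    set h : Fin q → ℂ := (emb cast) *ᵥ x with hhdef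
    have hsupp : ∀ i, j < i → h i = 0 := by
      intro i hji
      rw [hhdef]
      show ∑ l, emb cast i l * x l = 0
      refine Finset.sum_eq_zero fun l _ => ?_
      have : cast l ≠ i := by
        intro hc
        have h1 : (i : ℕ) = l.1 := by rw [← hc]
        have h2 : l.1 ≤ j.1 := by omega
        have := Fin.lt_def.mp hji
        omega
      simp [emb, this]
    have happ : ∀ l, h (cast l) = x l := by
      intro l
      rw [hhdef]
      have : ∀ l' : Fin (j.1+1), (if cast l' = cast l then (1:ℂ) else 0) * x l'
          = if l' = l then x l' else 0 := by
        intro l'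
        by_cases hc : l' = l
        · simp [hc]
        · have : cast l' ≠ cast l := fun hh => hc (hcast_inj hh)
          simp [hc, this]
      calc (emb cast *ᵥ x) (cast l) = ∑ l', (if cast l' = cast l then (1:ℂ) else 0) * x l' := by
            simp [emb, Matrix.mulVec, dotProduct]
        _ = ∑ l', if l' = l then x l' else 0 := Finset.sum_congr rfl fun l' _ => this l'
        _ = x l := by simp
    have hne0 : ∃ i, h i ≠ 0 := by
      obtain ⟨l₀, hl₀⟩ := Function.ne_iff.mp hx0
      exact ⟨cast l₀, by rw [happ]; simpa using hl₀⟩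
    set g : Fin q → ℂ := Wᴴ *ᵥ h with hgdef
    have hconstraint : ∀ k : Fin j.1, g (τ ⟨k.1, lt_trans k.2 j.2⟩) = 0 := by
      intro k
      have h1 : g = (Wᴴ * emb cast) *ᵥ x := by rw [hgdef, hhdef, Matrix.mulVec_mulVec]
      have h2 : Wᴴ * emb cast = Wᴴ.submatrix id cast := mul_emb Wᴴ cast
      have : g (τ ⟨k.1, lt_trans k.2 j.2⟩) = (T *ᵥ x) k := by
        rw [h1, h2]
        simp [Matrix.mulVec, dotProduct, hTdef, Matrix.submatrix_apply]
      rw [this, hTx0]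
      rfl
    have hquad : star h ⬝ᵥ M *ᵥ h = ((∑ i, ρ i * Complex.normSq (g i) : ℝ) : ℂ) := by
      conv_lhs => rw [hspec]
      rw [dot_conj, ← hgdef, dot_diag]
    have hnormeq : star h ⬝ᵥ h = star g ⬝ᵥ g := by
      have h1 : star h ⬝ᵥ ((Wᴴ)ᴴ * 1 * Wᴴ) *ᵥ h = star g ⬝ᵥ 1 *ᵥ g := dot_conj Wᴴ 1 h
      rw [conjTranspose_conjTranspose, mul_one, hW1, Matrix.one_mulVec,
        Matrix.one_mulVec] at h1
      exact h1
    set c : ℝ := ∑ i, Complex.normSq (h i) with hcdef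
    have hgsum : ∑ i, Complex.normSq (g i) = c := by
      have := (dot_star_self h).symm.trans ((hnormeq).trans (dot_star_self g))
      exact_mod_cast this.symm
    have hcpos : 0 < c := by
      obtain ⟨i₀, hi₀⟩ := hne0
      exact Finset.sum_pos' (fun i _ => Complex.normSq_nonneg _)
        ⟨i₀, Finset.mem_univ _, Complex.normSq_pos.mpr hi₀⟩
    -- the sorted bound
    have hbound : ∑ i, ρ i * Complex.normSq (g i) ≤ ρ (τ j) * c := by
      have hre : ∑ i, ρ i * Complex.normSq (g i)
          = ∑ k, ρ (τ k) * Complex.normSq (g (τ k)) :=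
        (Equiv.sum_comp τ (fun i => ρ i * Complex.normSq (g i))).symm
      have hre2 : ∑ k, Complex.normSq (g (τ k)) = ∑ i, Complex.normSq (g i) :=
        Equiv.sum_comp τ (fun i => Complex.normSq (g i))
      rw [hre, ← hgsum, ← hre2, Finset.mul_sum]
      refine Finset.sum_le_sum fun k _ => ?_
      by_cases hk : (k : ℕ) < j.1
      · have : g (τ k) = 0 := by
          have := hconstraint ⟨k.1, hk⟩
          simpa using this
        simp [this]
      · have hjk : j ≤ k := by
          rw [Fin.le_def]; omega
        exact mul_le_mul_of_nonneg_right (hanti j k hjk) (Complex.normSq_nonneg _)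
    -- normalize
    set s : ℝ := Real.sqrt c with hsdef
    have hspos : 0 < s := Real.sqrt_pos.mpr hcpos
    have hs2 : s * s = c := Real.mul_self_sqrt hcpos.le
    set a : ℂ := ((s⁻¹ : ℝ) : ℂ) with hadef
    set hh : Fin q → ℂ := a • h with hhhdef
    have hstar_a : star a = a := by rw [hadef, RCLike.star_def, Complex.conj_ofReal]
    have hsupp' : ∀ i, j < i → hh i = 0 := by
      intro i hji; rw [hhhdef]; simp [hsupp i hji]
    have hunit : star hh ⬝ᵥ hh = 1 := by
      have hs0 : s ≠ 0 := ne_of_gt hspos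
      rw [hhhdef, star_smul, smul_dotProduct, dotProduct_smul, hstar_a,
        dot_star_self, ← hcdef, hadef, smul_eq_mul, smul_eq_mul,
        ← Complex.ofReal_mul, ← Complex.ofReal_mul]
      norm_cast
      rw [← hs2]
      field_simp
    have hform : (star hh ⬝ᵥ M *ᵥ hh).re = s⁻¹ * s⁻¹ * ∑ i, ρ i * Complex.normSq (g i) := by
      rw [hhhdef, star_smul, smul_dotProduct, Matrix.mulVec_smul, dotProduct_smul,
        hstar_a, hquad, hadef, smul_eq_mul, smul_eq_mul,
        ← Complex.ofReal_mul, ← Complex.ofReal_mul, Complex.ofReal_re]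
      ring
    have := H j hh hsupp' hunit
    rw [hform] at this
    have hfinal : s⁻¹ * s⁻¹ * ∑ i, ρ i * Complex.normSq (g i) ≤ ρ (τ j) := by
      have hnn : (0:ℝ) ≤ s⁻¹ * s⁻¹ := mul_nonneg (by positivity) (by positivity)
      calc s⁻¹ * s⁻¹ * ∑ i, ρ i * Complex.normSq (g i)
          ≤ s⁻¹ * s⁻¹ * (ρ (τ j) * c) := mul_le_mul_of_nonneg_left hbound hnn
        _ = ρ (τ j) * (s⁻¹ * s⁻¹ * (s * s)) := by rw [hs2]; ring
        _ = ρ (τ j) := by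
            field_simp
      -- (s⁻¹ * s⁻¹ * (s*s)) = 1
    exact le_trans this hfinal
  -- construction of the unitary
  refine ⟨(W.submatrix id ⇑τ)ᴴ, ?_, ?_⟩
  · rw [mem_unitaryGroup_iff, Matrix.star_eq_conjTranspose, conjTranspose_conjTranspose,
      Matrix.conjTranspose_submatrix]
    rw [← Matrix.submatrix_mul Wᴴ W ⇑τ id ⇑τ Function.bijective_id, hW2]
    exact Matrix.submatrix_one_equiv τ
  · have hdiag : (W.submatrix id ⇑τ)ᴴ * M * ((W.submatrix id ⇑τ)ᴴ)ᴴ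
        = Matrix.diagonal (fun i => (ρ (τ i) : ℂ)) := by
      rw [conjTranspose_conjTranspose, Matrix.conjTranspose_submatrix]
      have h1 : Wᴴ.submatrix ⇑τ id * M = (Wᴴ * M).submatrix ⇑τ id := by
        have := Matrix.submatrix_mul Wᴴ M ⇑τ id id Function.bijective_id
        rw [Matrix.submatrix_id_id] at this
        exact this.symm
      have h2 : (Wᴴ * M).submatrix ⇑τ id * W.submatrix id ⇑τ
          = ((Wᴴ * M) * W).submatrix ⇑τ ⇑τ :=
        (Matrix.submatrix_mul (Wᴴ * M) W ⇑τ id ⇑τ Function.bijective_id).symm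
      rw [h1, h2]
      have h3 : Wᴴ * M * W = Matrix.diagonal (fun i => (ρ i : ℂ)) := by
        rw [← ofReal_comp_eq, ← Matrix.star_eq_conjTranspose]
        have := hM.conjStarAlgAut_star_eigenvectorUnitary
        rw [Unitary.conjStarAlgAut_apply, Unitary.coe_star, star_star] at this
        exact this
      rw [h3, Matrix.submatrix_diagonal _ ⇑τ (Equiv.injective τ)]
      rfl
    rw [hdiag, Matrix.diagonal_sub]
    refine Matrix.PosSemidef.diagonal fun i => ?_
    rw [← Complex.ofReal_sub]
    simp only [Pi.zero_apply]
    rw [Complex.zero_le_real]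
    exact sub_nonneg.mpr (claim1 i)


lemma emb_mulVec_apply (g : κ → ι) (hg : Function.Injective g) (x : κ → ℂ) (k : κ) :
    (emb g *ᵥ x) (g k) = x k := by
  have : ∀ k' : κ, (if g k' = g k then (1:ℂ) else 0) * x k'
      = if k' = k then x k' else 0 := by
    intro k'
    by_cases hc : k' = k
    · simp [hc]
    · have : g k' ≠ g k := fun hh => hc (hg hh)
      simp [hc, this]
  calc (emb g *ᵥ x) (g k) = ∑ k', (if g k' = g k then (1:ℂ) else 0) * x k' := by
        simp [emb, Matrix.mulVec, dotProduct]
    _ = ∑ k', if k' = k then x k' else 0 := Finset.sum_congr rfl fun k' _ => this k'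
    _ = x k := by simp

lemma emb_mulVec_apply_ne (g : κ → ι) (x : κ → ℂ) (i : ι) (hi : ∀ k, g k ≠ i) :
    (emb g *ᵥ x) i = 0 := by
  show ∑ k, emb g i k * x k = 0
  refine Finset.sum_eq_zero fun k _ => ?_
  simp [emb, hi k]

lemma sum_emb (g : κ → ι) (hg : Function.Injective g) (r : ι → ℝ) (x : κ → ℂ) :
    ∑ i, r i * Complex.normSq ((emb g *ᵥ x) i) = ∑ k, r (g k) * Complex.normSq (x k) := by
  have h0 : ∀ i ∈ Finset.univ, i ∉ Finset.univ.image g →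
      r i * Complex.normSq ((emb g *ᵥ x) i) = 0 := by
    intro i _ hni
    have : ∀ k, g k ≠ i := by
      intro k hk
      exact hni (Finset.mem_image.mpr ⟨k, Finset.mem_univ _, hk⟩)
    rw [emb_mulVec_apply_ne g x i this]
    simp
  rw [← Finset.sum_subset (Finset.subset_univ (Finset.univ.image g)) h0,
    Finset.sum_image (fun a _ b _ hab => hg hab)]
  exact Finset.sum_congr rfl fun k _ => by rw [emb_mulVec_apply g hg]


end BourinAux


open BourinAux

theorem cfc_mean_le_mean_unitary_conj
    {n : ℕ} (f : ℝ → ℝ) (hf : ConvexOn ℝ Set.univ f)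
    (A B : Matrix (Fin n) (Fin n) ℂ) (hA : A.IsHermitian) (hB : B.IsHermitian) :
    ∃ U V : Matrix (Fin n) (Fin n) ℂ,
      U ∈ Matrix.unitaryGroup (Fin n) ℂ ∧ V ∈ Matrix.unitaryGroup (Fin n) ℂ ∧
      ((2 : ℝ)⁻¹ • (U * ((2 : ℝ)⁻¹ • (hA.cfc f + hB.cfc f)) * Uᴴ +
          V * ((2 : ℝ)⁻¹ • (hA.cfc f + hB.cfc f)) * Vᴴ) -
        (isHermitian_half_smul (hA.add hB)).cfc f).PosSemidef := by
  classical
  by_cases hn : n = 0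
  · subst hn
    refine ⟨1, 1, one_mem _, one_mem _, ⟨?_, fun x => ?_⟩⟩
    · ext i j; exact i.elim0
    · simp [Subsingleton.elim x 0]
  have hn1 : 0 < n := Nat.pos_of_ne_zero hn
  have hY : ((2 : ℝ)⁻¹ • (hA.cfc f + hB.cfc f)).IsHermitian :=
    isHermitian_half_smul ((isHermitian_cfc hA f).add (isHermitian_cfc hB f))
  set Y : Matrix (Fin n) (Fin n) ℂ := (2:ℝ)⁻¹ • (hA.cfc f + hB.cfc f) with hYdef
  have hZ : ((2 : ℝ)⁻¹ • (A + B)).IsHermitian := isHermitian_half_smul (hA.add hB)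
  set Z : Matrix (Fin n) (Fin n) ℂ := (2:ℝ)⁻¹ • (A + B) with hZdef
  set W0 : Matrix (Fin n) (Fin n) ℂ := (hZ.eigenvectorUnitary : Matrix (Fin n) (Fin n) ℂ)
    with hW0def
  set ν0 : Fin n → ℝ := hZ.eigenvalues with hν0def
  set σ : Equiv.Perm (Fin n) := Tuple.sort ν0 with hσdef
  set ν : Fin n → ℝ := ν0 ∘ ⇑σ with hνdef
  have hνmono : Monotone ν := Tuple.monotone_sort ν0
  have hW0mem : W0 ∈ Matrix.unitaryGroup (Fin n) ℂ := (hZ.eigenvectorUnitary).2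
  have hW01 : W0 * W0ᴴ = 1 := by
    rw [← Matrix.star_eq_conjTranspose]; exact mem_unitaryGroup_iff.mp hW0mem
  have hW02 : W0ᴴ * W0 = 1 := by
    rw [← Matrix.star_eq_conjTranspose]; exact mem_unitaryGroup_iff'.mp hW0mem
  set W : Matrix (Fin n) (Fin n) ℂ := W0.submatrix id ⇑σ with hWdef
  have hWH : Wᴴ = W0ᴴ.submatrix ⇑σ id := Matrix.conjTranspose_submatrix _ _ _
  have hW1 : W * Wᴴ = 1 := by
    rw [hWdef, hWH, Matrix.submatrix_mul_equiv W0 W0ᴴ id σ id, hW01,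
      Matrix.submatrix_id_id]
  have hW2 : Wᴴ * W = 1 := by
    rw [hWdef, hWH]
    have h1 := Matrix.submatrix_mul W0ᴴ W0 ⇑σ id ⇑σ Function.bijective_id
    rw [← h1, hW02]
    exact Matrix.submatrix_one_equiv σ
  have hWmem : W ∈ Matrix.unitaryGroup (Fin n) ℂ := by
    rw [mem_unitaryGroup_iff, Matrix.star_eq_conjTranspose]; exact hW1
  -- sorted diagonalization
  have hsorted : ∀ r : Fin n → ℝ,
      W * Matrix.diagonal (fun i => (r (σ i) : ℂ)) * Wᴴ
        = W0 * Matrix.diagonal (fun i => (r i : ℂ)) * W0ᴴ := by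
    intro r
    have hd : Matrix.diagonal (fun i => (r (σ i) : ℂ))
        = (Matrix.diagonal fun i => (r i : ℂ)).submatrix ⇑σ ⇑σ := by
      rw [Matrix.submatrix_diagonal _ ⇑σ (Equiv.injective σ)]; rfl
    rw [hWdef, hWH, hd, Matrix.submatrix_mul_equiv W0 (Matrix.diagonal _) id σ ⇑σ,
      Matrix.submatrix_mul_equiv (W0 * Matrix.diagonal _) W0ᴴ id σ id,
      Matrix.submatrix_id_id]
  have hZspec : Z = W * Matrix.diagonal (fun i => (ν i : ℂ)) * Wᴴ := by
    rw [hνdef]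
    rw [show (fun i => ((ν0 ∘ ⇑σ) i : ℂ)) = fun i => (ν0 (σ i) : ℂ) from rfl]
    rw [hsorted ν0]
    have := hZ.spectral_theorem
    rw [← Matrix.star_eq_conjTranspose, ← ofReal_comp_eq]
    exact this
  have hXspec : (isHermitian_half_smul (hA.add hB)).cfc f
      = W * Matrix.diagonal (fun i => (f (ν i) : ℂ)) * Wᴴ := by
    rw [hνdef]
    rw [show (fun i => ((f ((ν0 ∘ ⇑σ) i)) : ℂ)) = fun i => ((f ∘ ν0) (σ i) : ℂ) from rfl]
    rw [hsorted (f ∘ ν0)]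
    rw [← Matrix.star_eq_conjTranspose]
    rfl
  -- minimizer of f on the spectral interval
  set lo : ℝ := ν ⟨0, hn1⟩ with hlodef
  set hi : ℝ := ν ⟨n-1, by omega⟩ with hhidef
  have hlohi : lo ≤ hi := hνmono (by rw [Fin.le_def]; exact Nat.zero_le _)
  have hν_mem : ∀ i, ν i ∈ Set.Icc lo hi := by
    intro i
    constructor
    · exact hνmono (by rw [Fin.le_def]; exact Nat.zero_le _)
    · exact hνmono (by rw [Fin.le_def]; exact Nat.le_pred_of_lt i.2)
  have hfc : ContinuousOn f (Set.Icc lo hi) :=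
    (ConvexOn.continuousOn isOpen_univ hf).mono (Set.subset_univ _)
  obtain ⟨t0, ht0mem, ht0min⟩ :=
    (isCompact_Icc).exists_isMinOn (Set.nonempty_Icc.mpr hlohi) hfc
  have hmin : ∀ t ∈ Set.Icc lo hi, f t0 ≤ f t := fun t ht => ht0min ht
  have hmono_left : ∀ x y : ℝ, x ∈ Set.Icc lo hi → y ≤ t0 → x ≤ y → f y ≤ f x := by
    intro x y hx hyt hxy
    have hxt : x ≤ t0 := le_trans hxy hyt
    have hseg : y ∈ segment ℝ x t0 := by rw [segment_eq_Icc hxt]; exact ⟨hxy, hyt⟩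
    have h1 := hf.le_on_segment (Set.mem_univ x) (Set.mem_univ t0) hseg
    exact le_trans h1 (sup_le (le_refl _) (hmin x hx))
  have hmono_right : ∀ x y : ℝ, y ∈ Set.Icc lo hi → t0 ≤ x → x ≤ y → f x ≤ f y := by
    intro x y hy htx hxy
    have hty : t0 ≤ y := le_trans htx hxy
    have hseg : x ∈ segment ℝ t0 y := by rw [segment_eq_Icc hty]; exact ⟨htx, hxy⟩
    have h1 := hf.le_on_segment (Set.mem_univ t0) (Set.mem_univ y) hseg
    exact le_trans h1 (sup_le (hmin y hy) (le_refl _))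
  -- the splitting point
  set p : ℕ := (Finset.univ.filter (fun i : Fin n => ν i < t0)).card with hpdef
  have hple : p ≤ n := by
    rw [hpdef]
    exact le_trans (Finset.card_filter_le _ _) (le_of_eq (Finset.card_fin n))
  have hchar : ∀ i : Fin n, ((i : ℕ) < p ↔ ν i < t0) := by
    intro i
    constructor
    · intro hip
      by_contra hnot
      push_neg at hnot
      have hsub : Finset.univ.filter (fun k : Fin n => ν k < t0) ⊆ Finset.Iio i := by
        intro k hk
        rw [Finset.mem_filter] at hk
        rw [Finset.mem_Iio]
        by_contra hki
        push_neg at hki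
        exact absurd (lt_of_le_of_lt (le_trans hnot (hνmono hki)) hk.2) (lt_irrefl _)
      have := Finset.card_le_card hsub
      rw [Fin.card_Iio] at this
      omega
    · intro hlt
      have hsub : Finset.Iic i ⊆ Finset.univ.filter (fun k : Fin n => ν k < t0) := by
        intro k hk
        rw [Finset.mem_Iic] at hk
        exact Finset.mem_filter.mpr ⟨Finset.mem_univ _, lt_of_le_of_lt (hνmono hk) hlt⟩
      have := Finset.card_le_card hsub
      rw [Fin.card_Iic] at this
      omega
  -- the two enumerations
  set g₁ : Fin p → Fin n := fun k => ⟨k.1, lt_of_lt_of_le k.2 hple⟩ with hg₁def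
  set g₂ : Fin (n-p) → Fin n := fun k => ⟨n - 1 - k.1, by omega⟩ with hg₂def
  have hg₁inj : Function.Injective g₁ := by
    intro a b hab
    have := congrArg Fin.val hab
    simp [hg₁def] at this
    exact Fin.ext this
  have hg₂inj : Function.Injective g₂ := by
    intro a b hab
    have := congrArg Fin.val hab
    simp [hg₂def] at this
    apply Fin.ext
    omega
  have hg₁lt : ∀ k, ν (g₁ k) < t0 := fun k => (hchar (g₁ k)).mp k.2
  have hg₂p : ∀ k : Fin (n-p), p ≤ (g₂ k : ℕ) := by
    intro k
    have := k.2
    simp [hg₂def]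
    omega
  have hg₂ge : ∀ k, t0 ≤ ν (g₂ k) := by
    intro k
    by_contra hc
    push_neg at hc
    have := (hchar (g₂ k)).mpr hc
    have := hg₂p k
    omega
  have hdisj : ∀ k l, g₁ k ≠ g₂ l := by
    intro k l hkl
    have h1 := congrArg Fin.val hkl
    have h2 := k.2
    have h3 := hg₂p l
    simp [hg₁def] at h1
    omega
  -- common Jensen-type estimate
  have hw1 : ∀ (q : ℕ) (h : Fin q → ℂ), star h ⬝ᵥ h = 1 →
      ∑ k, Complex.normSq (h k) = 1 := by
    intro q h hh
    have := (dot_star_self h).symm.trans hh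
    exact_mod_cast this
  have hZspec' : Z = (Wᴴ)ᴴ * Matrix.diagonal (fun i => (ν i : ℂ)) * Wᴴ := by
    rw [conjTranspose_conjTranspose]; exact hZspec
  have Hcommon : ∀ (q : ℕ) (g : Fin q → Fin n), Function.Injective g →
      ∀ h : Fin q → ℂ, star h ⬝ᵥ h = 1 →
      f (∑ k, ν (g k) * Complex.normSq (h k))
        ≤ (star h ⬝ᵥ ((W * emb g)ᴴ * Y * (W * emb g)) *ᵥ h).re := by
    intro q g hg h hunit
    set φ : Fin n → ℂ := (W * emb g) *ᵥ h with hφdef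
    have hφform : star h ⬝ᵥ ((W * emb g)ᴴ * Y * (W * emb g)) *ᵥ h = star φ ⬝ᵥ Y *ᵥ φ :=
      dot_conj (W * emb g) Y h
    have hRR : (W * emb g)ᴴ * (W * emb g) = 1 := by
      rw [Matrix.conjTranspose_mul]
      calc (emb g)ᴴ * Wᴴ * (W * emb g) = (emb g)ᴴ * (Wᴴ * W * emb g) := by
            rw [Matrix.mul_assoc, Matrix.mul_assoc]
        _ = (emb g)ᴴ * emb g := by rw [hW2, Matrix.one_mul]
        _ = 1 := conjTranspose_emb_mul_emb_self g hg
    have hφunit : star φ ⬝ᵥ φ = 1 := by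
      have h1 := dot_conj (W * emb g) 1 h
      rw [Matrix.mul_one, hRR, Matrix.one_mulVec, Matrix.one_mulVec] at h1
      rw [hφdef, ← h1, hunit]
    have hsplitY : (star φ ⬝ᵥ Y *ᵥ φ).re
        = 2⁻¹ * ((star φ ⬝ᵥ hA.cfc f *ᵥ φ).re + (star φ ⬝ᵥ hB.cfc f *ᵥ φ).re) := by
      rw [hYdef, Matrix.smul_mulVec, Matrix.add_mulVec, dotProduct_smul,
        dotProduct_add, Complex.smul_re, Complex.add_re, smul_eq_mul]
    have hsplitZ : (star φ ⬝ᵥ Z *ᵥ φ).re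
        = 2⁻¹ * ((star φ ⬝ᵥ A *ᵥ φ).re + (star φ ⬝ᵥ B *ᵥ φ).re) := by
      rw [hZdef, Matrix.smul_mulVec, Matrix.add_mulVec, dotProduct_smul,
        dotProduct_add, Complex.smul_re, Complex.add_re, smul_eq_mul]
    have hzval : (star φ ⬝ᵥ Z *ᵥ φ).re = ∑ k, ν (g k) * Complex.normSq (h k) := by
      have h1 : star φ ⬝ᵥ Z *ᵥ φ
          = star (Wᴴ *ᵥ φ) ⬝ᵥ (Matrix.diagonal (fun i => (ν i : ℂ))) *ᵥ (Wᴴ *ᵥ φ) := by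
        conv_lhs => rw [hZspec']
        exact dot_conj Wᴴ _ φ
      have h2 : Wᴴ *ᵥ φ = emb g *ᵥ h := by
        rw [hφdef, Matrix.mulVec_mulVec, ← Matrix.mul_assoc, hW2, Matrix.one_mul]
      rw [h1, h2, dot_diag, Complex.ofReal_re]
      exact sum_emb g hg ν h
    have hja := jensen_qf hf hA φ hφunit
    have hjb := jensen_qf hf hB φ hφunit
    have h2pt : f ((star φ ⬝ᵥ Z *ᵥ φ).re)
        ≤ 2⁻¹ * (f ((star φ ⬝ᵥ A *ᵥ φ).re) + f ((star φ ⬝ᵥ B *ᵥ φ).re)) := by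
      rw [hsplitZ]
      have hcc := hf.2 (Set.mem_univ ((star φ ⬝ᵥ A *ᵥ φ).re))
        (Set.mem_univ ((star φ ⬝ᵥ B *ᵥ φ).re)) (by norm_num : (0:ℝ) ≤ 2⁻¹)
        (by norm_num : (0:ℝ) ≤ 2⁻¹) (by norm_num : (2:ℝ)⁻¹ + 2⁻¹ = 1)
      simp only [smul_eq_mul] at hcc
      calc f (2⁻¹ * ((star φ ⬝ᵥ A *ᵥ φ).re + (star φ ⬝ᵥ B *ᵥ φ).re))
          = f (2⁻¹ * (star φ ⬝ᵥ A *ᵥ φ).re + 2⁻¹ * (star φ ⬝ᵥ B *ᵥ φ).re) := by ring_nf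
        _ ≤ 2⁻¹ * f ((star φ ⬝ᵥ A *ᵥ φ).re) + 2⁻¹ * f ((star φ ⬝ᵥ B *ᵥ φ).re) := hcc
        _ = 2⁻¹ * (f ((star φ ⬝ᵥ A *ᵥ φ).re) + f ((star φ ⬝ᵥ B *ᵥ φ).re)) := by ring
    calc f (∑ k, ν (g k) * Complex.normSq (h k)) = f ((star φ ⬝ᵥ Z *ᵥ φ).re) := by rw [hzval]
      _ ≤ 2⁻¹ * (f ((star φ ⬝ᵥ A *ᵥ φ).re) + f ((star φ ⬝ᵥ B *ᵥ φ).re)) := h2pt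
      _ ≤ 2⁻¹ * ((star φ ⬝ᵥ hA.cfc f *ᵥ φ).re + (star φ ⬝ᵥ hB.cfc f *ᵥ φ).re) := by
          have := add_le_add hja hjb
          nlinarith [this]
      _ = (star φ ⬝ᵥ Y *ᵥ φ).re := hsplitY.symm
      _ = (star h ⬝ᵥ ((W * emb g)ᴴ * Y * (W * emb g)) *ᵥ h).re := by rw [hφform]
  -- the two block hypotheses
  set d₁ : Fin p → ℝ := fun k => f (ν (g₁ k)) with hd₁def
  set d₂ : Fin (n-p) → ℝ := fun k => f (ν (g₂ k)) with hd₂def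
  have hd₁anti : Antitone d₁ := by
    intro a b hab
    exact hmono_left (ν (g₁ a)) (ν (g₁ b)) (hν_mem _) (le_of_lt (hg₁lt b))
      (hνmono (by rw [Fin.le_def]; exact hab))
  have hd₂anti : Antitone d₂ := by
    intro a b hab
    refine hmono_right (ν (g₂ b)) (ν (g₂ a)) (hν_mem _) (hg₂ge b) (hνmono ?_)
    rw [Fin.le_def]
    have ha := a.2; have hb := b.2
    simp only [hg₂def]
    omega
  have H₁ : ∀ (j : Fin p) (h : Fin p → ℂ), (∀ i, j < i → h i = 0) → star h ⬝ᵥ h = 1 →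
      d₁ j ≤ (star h ⬝ᵥ ((W * emb g₁)ᴴ * Y * (W * emb g₁)) *ᵥ h).re := by
    intro j h hsupp hunit
    have hsum1 : ∑ k, Complex.normSq (h k) = 1 := hw1 p h hunit
    set z := ∑ k, ν (g₁ k) * Complex.normSq (h k) with hzdef
    have hzle : z ≤ ν (g₁ j) := by
      calc z ≤ ∑ k, ν (g₁ j) * Complex.normSq (h k) := by
            refine Finset.sum_le_sum fun k _ => ?_
            by_cases hkj : k ≤ j
            · exact mul_le_mul_of_nonneg_right
                (hνmono (by rw [Fin.le_def]; exact hkj)) (Complex.normSq_nonneg _)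
            · push_neg at hkj
              rw [hsupp k hkj]
              simp
        _ = ν (g₁ j) := by rw [← Finset.mul_sum, hsum1, mul_one]
    have hzlo : lo ≤ z := by
      calc lo = ∑ k, lo * Complex.normSq (h k) := by rw [← Finset.mul_sum, hsum1, mul_one]
        _ ≤ z := Finset.sum_le_sum fun k _ =>
            mul_le_mul_of_nonneg_right (hν_mem (g₁ k)).1 (Complex.normSq_nonneg _)
    have hzhi : z ≤ hi := by
      calc z ≤ ∑ k, hi * Complex.normSq (h k) := Finset.sum_le_sum fun k _ =>
            mul_le_mul_of_nonneg_right (hν_mem (g₁ k)).2 (Complex.normSq_nonneg _)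
        _ = hi := by rw [← Finset.mul_sum, hsum1, mul_one]
    have hd : f (ν (g₁ j)) ≤ f z :=
      hmono_left z (ν (g₁ j)) ⟨hzlo, hzhi⟩ (le_of_lt (hg₁lt j)) hzle
    exact le_trans hd (Hcommon p g₁ hg₁inj h hunit)
  have H₂ : ∀ (j : Fin (n-p)) (h : Fin (n-p) → ℂ), (∀ i, j < i → h i = 0) →
      star h ⬝ᵥ h = 1 →
      d₂ j ≤ (star h ⬝ᵥ ((W * emb g₂)ᴴ * Y * (W * emb g₂)) *ᵥ h).re := by
    intro j h hsupp hunit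
    have hsum1 : ∑ k, Complex.normSq (h k) = 1 := hw1 (n-p) h hunit
    set z := ∑ k, ν (g₂ k) * Complex.normSq (h k) with hzdef
    have hzge : ν (g₂ j) ≤ z := by
      calc ν (g₂ j) = ∑ k, ν (g₂ j) * Complex.normSq (h k) := by
            rw [← Finset.mul_sum, hsum1, mul_one]
        _ ≤ z := by
            refine Finset.sum_le_sum fun k _ => ?_
            by_cases hkj : k ≤ j
            · refine mul_le_mul_of_nonneg_right (hνmono ?_) (Complex.normSq_nonneg _)
              rw [Fin.le_def]
              have hk2 := k.2; have hj2 := j.2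
              simp only [hg₂def]
              omega
            · push_neg at hkj
              rw [hsupp k hkj]
              simp
    have hzhi : z ≤ hi := by
      calc z ≤ ∑ k, hi * Complex.normSq (h k) := Finset.sum_le_sum fun k _ =>
            mul_le_mul_of_nonneg_right (hν_mem (g₂ k)).2 (Complex.normSq_nonneg _)
        _ = hi := by rw [← Finset.mul_sum, hsum1, mul_one]
    have hzlo : lo ≤ z := by
      calc lo = ∑ k, lo * Complex.normSq (h k) := by rw [← Finset.mul_sum, hsum1, mul_one]
        _ ≤ z := Finset.sum_le_sum fun k _ =>
            mul_le_mul_of_nonneg_right (hν_mem (g₂ k)).1 (Complex.normSq_nonneg _)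
    have hd : f (ν (g₂ j)) ≤ f z :=
      hmono_right (ν (g₂ j)) z ⟨hzlo, hzhi⟩ (hg₂ge j) hzge
    exact le_trans hd (Hcommon (n-p) g₂ hg₂inj h hunit)
  -- apply the key lemma on each block
  have hM₁herm : (((W * emb g₁)ᴴ * Y * (W * emb g₁))).IsHermitian :=
    isHermitian_conjTranspose_mul_mul _ hY
  have hM₂herm : (((W * emb g₂)ᴴ * Y * (W * emb g₂))).IsHermitian :=
    isHermitian_conjTranspose_mul_mul _ hY
  obtain ⟨u₁, hu₁mem, hu₁psd⟩ := key hM₁herm d₁ hd₁anti H₁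
  obtain ⟨u₂, hu₂mem, hu₂psd⟩ := key hM₂herm d₂ hd₂anti H₂
  -- orthogonality between the embeddings
  have h11 : (emb g₁)ᴴ * emb g₁ = 1 := conjTranspose_emb_mul_emb_self g₁ hg₁inj
  have h22 : (emb g₂)ᴴ * emb g₂ = 1 := conjTranspose_emb_mul_emb_self g₂ hg₂inj
  have h12 : (emb g₁)ᴴ * emb g₂ = 0 := conjTranspose_emb_mul_emb_disjoint g₁ g₂ hdisj
  have h21 : (emb g₂)ᴴ * emb g₁ = 0 :=
    conjTranspose_emb_mul_emb_disjoint g₂ g₁ (fun k l => fun hh => hdisj l k hh.symm)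
  have c11 : ∀ X : Matrix (Fin p) (Fin n) ℂ, (emb g₁)ᴴ * (emb g₁ * X) = X := by
    intro X; rw [← Matrix.mul_assoc, h11, Matrix.one_mul]
  have c22 : ∀ X : Matrix (Fin (n-p)) (Fin n) ℂ, (emb g₂)ᴴ * (emb g₂ * X) = X := by
    intro X; rw [← Matrix.mul_assoc, h22, Matrix.one_mul]
  have c12 : ∀ X : Matrix (Fin (n-p)) (Fin n) ℂ, (emb g₁)ᴴ * (emb g₂ * X) = 0 := by
    intro X; rw [← Matrix.mul_assoc, h12, Matrix.zero_mul]
  have c21 : ∀ X : Matrix (Fin p) (Fin n) ℂ, (emb g₂)ᴴ * (emb g₁ * X) = 0 := by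
    intro X; rw [← Matrix.mul_assoc, h21, Matrix.zero_mul]
  have hu₁u : u₁ * u₁ᴴ = 1 := by
    rw [← Matrix.star_eq_conjTranspose]; exact mem_unitaryGroup_iff.mp hu₁mem
  have hu₂u : u₂ * u₂ᴴ = 1 := by
    rw [← Matrix.star_eq_conjTranspose]; exact mem_unitaryGroup_iff.mp hu₂mem
  have cu₁ : ∀ X : Matrix (Fin p) (Fin n) ℂ, u₁ * (u₁ᴴ * X) = X := by
    intro X; rw [← Matrix.mul_assoc, hu₁u, Matrix.one_mul]
  have cu₂ : ∀ X : Matrix (Fin (n-p)) (Fin n) ℂ, u₂ * (u₂ᴴ * X) = X := by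
    intro X; rw [← Matrix.mul_assoc, hu₂u, Matrix.one_mul]
  -- diagonal reconstruction
  have hdiag_sum : ∀ c : Fin n → ℂ,
      emb g₁ * Matrix.diagonal (fun k => c (g₁ k)) * (emb g₁)ᴴ
        + emb g₂ * Matrix.diagonal (fun k => c (g₂ k)) * (emb g₂)ᴴ = Matrix.diagonal c := by
    intro c
    rw [emb_mul_diag_mul, emb_mul_diag_mul, Matrix.diagonal_add]
    refine congrArg Matrix.diagonal ?_
    funext i
    by_cases hip : (i : ℕ) < p
    · have hs1 : (∑ k : Fin p, if g₁ k = i then c (g₁ k) else 0) = c i := by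
        rw [Finset.sum_eq_single_of_mem ⟨i.1, hip⟩ (Finset.mem_univ _)]
        · have hgi : g₁ ⟨i.1, hip⟩ = i := Fin.ext rfl
          rw [if_pos hgi, hgi]
        · intro b _ hb
          refine if_neg fun hh => hb ?_
          exact hg₁inj (hh.trans (Fin.ext rfl : g₁ ⟨i.1, hip⟩ = i).symm)
      have hs2 : (∑ k : Fin (n-p), if g₂ k = i then c (g₂ k) else 0) = 0 := by
        refine Finset.sum_eq_zero fun k _ => if_neg fun hh => ?_
        exact absurd (hh ▸ hg₂p k) (by omega)
      rw [hs1, hs2, add_zero]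
    · have hipge : p ≤ (i : ℕ) := le_of_not_gt hip
      have hi2 := i.2
      have hk0lt : n - 1 - (i : ℕ) < n - p := by omega
      have hs1 : (∑ k : Fin p, if g₁ k = i then c (g₁ k) else 0) = 0 := by
        refine Finset.sum_eq_zero fun k _ => if_neg fun hh => ?_
        have h2 := congrArg Fin.val hh
        have h3 := k.2
        simp only [hg₁def] at h2
        omega
      have hs2 : (∑ k : Fin (n-p), if g₂ k = i then c (g₂ k) else 0) = c i := by
        rw [Finset.sum_eq_single_of_mem ⟨n - 1 - i.1, hk0lt⟩ (Finset.mem_univ _)]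
        · have hgi : g₂ ⟨n - 1 - i.1, hk0lt⟩ = i := by
            apply Fin.ext
            show n - 1 - (n - 1 - i.1) = i.1
            omega
          rw [if_pos hgi, hgi]
        · intro b _ hb
          refine if_neg fun hh => hb ?_
          apply Fin.ext
          have h2 : n - 1 - (b : ℕ) = (i : ℕ) := congrArg Fin.val hh
          have h3 := b.2
          show (b : ℕ) = n - 1 - i.1
          omega
      rw [hs1, hs2, zero_add]
  have hPP : emb g₁ * (emb g₁)ᴴ + emb g₂ * (emb g₂)ᴴ = 1 := by
    have := hdiag_sum (fun _ => (1:ℂ))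
    simpa using this
  -- global pieces
  set u : Matrix (Fin n) (Fin n) ℂ
    := emb g₁ * u₁ * (emb g₁)ᴴ + emb g₂ * u₂ * (emb g₂)ᴴ with hudef
  set Jm : Matrix (Fin n) (Fin n) ℂ
    := emb g₁ * (emb g₁)ᴴ - emb g₂ * (emb g₂)ᴴ with hJdef
  have humem : u ∈ Matrix.unitaryGroup (Fin n) ℂ := by
    rw [mem_unitaryGroup_iff, Matrix.star_eq_conjTranspose, hudef]
    simp only [conjTranspose_add, Matrix.conjTranspose_mul, conjTranspose_conjTranspose]
    simp only [Matrix.add_mul, Matrix.mul_add, Matrix.mul_assoc, c11, c12, c21, c22, cu₁, cu₂,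
      Matrix.mul_zero, Matrix.zero_mul, add_zero, zero_add]
    exact hPP
  have hJmem : Jm ∈ Matrix.unitaryGroup (Fin n) ℂ := by
    rw [mem_unitaryGroup_iff, Matrix.star_eq_conjTranspose, hJdef]
    simp only [conjTranspose_sub, Matrix.conjTranspose_mul, conjTranspose_conjTranspose]
    simp only [Matrix.sub_mul, Matrix.mul_sub, Matrix.mul_assoc, c11, c12, c21, c22,
      Matrix.mul_zero, Matrix.zero_mul, sub_zero, zero_sub, sub_neg_eq_add]
    exact hPP
  have hWHmem : Wᴴ ∈ Matrix.unitaryGroup (Fin n) ℂ := by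
    rw [← Matrix.star_eq_conjTranspose]
    exact Unitary.star_mem hWmem
  set C : Matrix (Fin n) (Fin n) ℂ := Wᴴ * Y * W with hCdef
  have hMC₁ : (W * emb g₁)ᴴ * Y * (W * emb g₁) = (emb g₁)ᴴ * C * emb g₁ := by
    rw [hCdef]
    simp only [Matrix.conjTranspose_mul, Matrix.mul_assoc]
  have hMC₂ : (W * emb g₂)ᴴ * Y * (W * emb g₂) = (emb g₂)ᴴ * C * emb g₂ := by
    rw [hCdef]
    simp only [Matrix.conjTranspose_mul, Matrix.mul_assoc]
  -- the pinching identity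
  have hJH : Jmᴴ = Jm := by
    rw [hJdef]
    simp only [conjTranspose_sub, Matrix.conjTranspose_mul, conjTranspose_conjTranspose]
  have halg : ∀ P₁ P₂ Cc : Matrix (Fin n) (Fin n) ℂ,
      (P₁ + P₂) * Cc * (P₁ + P₂) + (P₁ - P₂) * Cc * (P₁ - P₂)
        = (P₁ * Cc * P₁ + P₂ * Cc * P₂) + (P₁ * Cc * P₁ + P₂ * Cc * P₂) := by
    intro P₁ P₂ Cc
    noncomm_ring
  have hpinch : (2:ℝ)⁻¹ • (C + Jm * C * Jmᴴ)
      = emb g₁ * ((emb g₁)ᴴ * C * emb g₁) * (emb g₁)ᴴ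
        + emb g₂ * ((emb g₂)ᴴ * C * emb g₂) * (emb g₂)ᴴ := by
    have e1 : C + Jm * C * Jmᴴ
        = (emb g₁ * (emb g₁)ᴴ + emb g₂ * (emb g₂)ᴴ) * C
            * (emb g₁ * (emb g₁)ᴴ + emb g₂ * (emb g₂)ᴴ)
          + (emb g₁ * (emb g₁)ᴴ - emb g₂ * (emb g₂)ᴴ) * C
            * (emb g₁ * (emb g₁)ᴴ - emb g₂ * (emb g₂)ᴴ) := by
      rw [hJH, hJdef, hPP, Matrix.one_mul, Matrix.mul_one]
    rw [e1, halg]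
    have e2 : emb g₁ * (emb g₁)ᴴ * C * (emb g₁ * (emb g₁)ᴴ)
          + emb g₂ * (emb g₂)ᴴ * C * (emb g₂ * (emb g₂)ᴴ)
        = emb g₁ * ((emb g₁)ᴴ * C * emb g₁) * (emb g₁)ᴴ
          + emb g₂ * ((emb g₂)ᴴ * C * emb g₂) * (emb g₂)ᴴ := by
      simp only [Matrix.mul_assoc]
    rw [e2, ← two_smul ℝ, smul_smul]
    norm_num
  -- conjugating the pinched matrix by u
  have hu_Ct : u * (emb g₁ * ((emb g₁)ᴴ * C * emb g₁) * (emb g₁)ᴴ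
        + emb g₂ * ((emb g₂)ᴴ * C * emb g₂) * (emb g₂)ᴴ) * uᴴ
      = emb g₁ * (u₁ * ((emb g₁)ᴴ * C * emb g₁) * u₁ᴴ) * (emb g₁)ᴴ
        + emb g₂ * (u₂ * ((emb g₂)ᴴ * C * emb g₂) * u₂ᴴ) * (emb g₂)ᴴ := by
    rw [hudef]
    simp only [conjTranspose_add, Matrix.conjTranspose_mul, conjTranspose_conjTranspose]
    simp only [Matrix.add_mul, Matrix.mul_add, Matrix.mul_assoc, c11, c12, c21, c22,
      Matrix.mul_zero, Matrix.zero_mul, add_zero, zero_add]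
  -- the big identity
  have hNsum : (2:ℝ)⁻¹ • (u * C * uᴴ + (u * Jm) * C * (u * Jm)ᴴ)
        - Matrix.diagonal (fun i => ((f (ν i) : ℝ) : ℂ))
      = emb g₁ * (u₁ * ((W * emb g₁)ᴴ * Y * (W * emb g₁)) * u₁ᴴ
            - Matrix.diagonal (fun k => (d₁ k : ℂ))) * (emb g₁)ᴴ
        + emb g₂ * (u₂ * ((W * emb g₂)ᴴ * Y * (W * emb g₂)) * u₂ᴴ
            - Matrix.diagonal (fun k => (d₂ k : ℂ))) * (emb g₂)ᴴ := by
    have e3 : (u * Jm) * C * (u * Jm)ᴴ = u * (Jm * C * Jmᴴ) * uᴴ := by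
      simp only [Matrix.conjTranspose_mul, Matrix.mul_assoc]
    have e4 : (2:ℝ)⁻¹ • (u * C * uᴴ + u * (Jm * C * Jmᴴ) * uᴴ)
        = u * ((2:ℝ)⁻¹ • (C + Jm * C * Jmᴴ)) * uᴴ := by
      conv_rhs => rw [Matrix.mul_smul, Matrix.smul_mul, Matrix.mul_add, Matrix.add_mul]
    have e5 : Matrix.diagonal (fun i => ((f (ν i) : ℝ) : ℂ))
        = emb g₁ * Matrix.diagonal (fun k => (d₁ k : ℂ)) * (emb g₁)ᴴ
          + emb g₂ * Matrix.diagonal (fun k => (d₂ k : ℂ)) * (emb g₂)ᴴ :=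
      (hdiag_sum (fun i => ((f (ν i) : ℝ) : ℂ))).symm
    rw [e3, e4, hpinch, hu_Ct, e5, hMC₁, hMC₂]
    simp only [Matrix.mul_sub, Matrix.sub_mul]
    abel
  -- positivity of the right-hand side
  have hN₁ : (u₁ * ((W * emb g₁)ᴴ * Y * (W * emb g₁)) * u₁ᴴ
      - Matrix.diagonal (fun k => (d₁ k : ℂ))).PosSemidef := hu₁psd
  have hN₂ : (u₂ * ((W * emb g₂)ᴴ * Y * (W * emb g₂)) * u₂ᴴ
      - Matrix.diagonal (fun k => (d₂ k : ℂ))).PosSemidef := hu₂psd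
  have hinner : ((2:ℝ)⁻¹ • (u * C * uᴴ + (u * Jm) * C * (u * Jm)ᴴ)
      - Matrix.diagonal (fun i => ((f (ν i) : ℝ) : ℂ))).PosSemidef := by
    rw [hNsum]
    exact (hN₁.mul_mul_conjTranspose_same (emb g₁)).add
      (hN₂.mul_mul_conjTranspose_same (emb g₂))
  -- final answer
  refine ⟨W * u * Wᴴ, W * (u * Jm) * Wᴴ, ?_, ?_, ?_⟩
  · exact mul_mem (mul_mem hWmem humem) hWHmem
  · exact mul_mem (mul_mem hWmem (mul_mem humem hJmem)) hWHmem
  · have hgoal : (2:ℝ)⁻¹ • ((W * u * Wᴴ) * Y * (W * u * Wᴴ)ᴴ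
          + (W * (u * Jm) * Wᴴ) * Y * (W * (u * Jm) * Wᴴ)ᴴ)
        - (isHermitian_half_smul (hA.add hB)).cfc f
        = W * ((2:ℝ)⁻¹ • (u * C * uᴴ + (u * Jm) * C * (u * Jm)ᴴ)
            - Matrix.diagonal (fun i => ((f (ν i) : ℝ) : ℂ))) * Wᴴ := by
      rw [hXspec, hCdef]
      simp only [Matrix.conjTranspose_mul, conjTranspose_conjTranspose, Matrix.mul_sub,
        Matrix.sub_mul, Matrix.mul_smul, Matrix.smul_mul, Matrix.mul_add, Matrix.add_mul,
        Matrix.mul_assoc]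
    rw [hgoal]
    exact hinner.mul_mul_conjTranspose_same W
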